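/- Let Z be positive definite with extremal eigenvalues a ≥ b > 0, let ℰ be a subspace with compression Z_ℰ, and let 1 ≤ p ≤ 2. Then (Z_ℰ)^p ≥ (4ab/(a+b)²) · (Z^p)_ℰ in the Loewner order on ℰ. -/

import Mathlib

open scoped ComplexOrder
open Matrix

set_option linter.unusedSectionVars false


lemma geo_concave {x1 x2 y1 y2 th l : ℝ} (hx1 : 0 < x1) (hx2 : 0 < x2) (hy1 : 0 < y1)
    (hy2 : 0 < y2) (hth0 : 0 ≤ th) (hth1 : th ≤ 1) (hl0 : 0 ≤ l) (hl1 : l ≤ 1) :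
    th * (x1 ^ l * y1 ^ (1 - l)) + (1 - th) * (x2 ^ l * y2 ^ (1 - l)) ≤
      (th * x1 + (1 - th) * x2) ^ l * (th * y1 + (1 - th) * y2) ^ (1 - l) := by
  have hX : 0 < th * x1 + (1 - th) * x2 := by
    rcases eq_or_lt_of_le hth1 with h | h
    · subst h; simpa using hx1
    · nlinarith [mul_nonneg hth0 hx1.le, mul_pos (by linarith : (0:ℝ) < 1 - th) hx2]
  have hY : 0 < th * y1 + (1 - th) * y2 := by
    rcases eq_or_lt_of_le hth1 with h | h
    · subst h; simpa using hy1
    · nlinarith [mul_nonneg hth0 hy1.le, mul_pos (by linarith : (0:ℝ) < 1 - th) hy2]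
  set X := th * x1 + (1 - th) * x2 with hXdef
  set Y := th * y1 + (1 - th) * y2 with hYdef
  have k1 : (x1 / X) ^ l * (y1 / Y) ^ (1 - l) ≤ l * (x1 / X) + (1 - l) * (y1 / Y) :=
    Real.geom_mean_le_arith_mean2_weighted hl0 (by linarith) (by positivity) (by positivity)
      (by ring)
  have k2 : (x2 / X) ^ l * (y2 / Y) ^ (1 - l) ≤ l * (x2 / X) + (1 - l) * (y2 / Y) :=
    Real.geom_mean_le_arith_mean2_weighted hl0 (by linarith) (by positivity) (by positivity)
      (by ring)
  have key : th * ((x1 / X) ^ l * (y1 / Y) ^ (1 - l))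
      + (1 - th) * ((x2 / X) ^ l * (y2 / Y) ^ (1 - l)) ≤ 1 := by
    have h1 := add_le_add (mul_le_mul_of_nonneg_left k1 hth0)
      (mul_le_mul_of_nonneg_left k2 (by linarith : (0:ℝ) ≤ 1 - th))
    refine h1.trans_eq ?_
    rw [hXdef, hYdef]
    field_simp [show th * x1 + (1 - th) * x2 ≠ 0 from hX.ne', show th * y1 + (1 - th) * y2 ≠ 0 from hY.ne']
    ring
  calc th * (x1 ^ l * y1 ^ (1 - l)) + (1 - th) * (x2 ^ l * y2 ^ (1 - l))
      = X ^ l * Y ^ (1 - l) * (th * ((x1 / X) ^ l * (y1 / Y) ^ (1 - l))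
        + (1 - th) * ((x2 / X) ^ l * (y2 / Y) ^ (1 - l))) := by
        rw [Real.div_rpow hx1.le hX.le, Real.div_rpow hx2.le hX.le,
          Real.div_rpow hy1.le hY.le, Real.div_rpow hy2.le hY.le]
        have hXl : (0:ℝ) < X ^ l := Real.rpow_pos_of_pos hX _
        have hYl : (0:ℝ) < Y ^ (1 - l) := Real.rpow_pos_of_pos hY _
        field_simp
    _ ≤ X ^ l * Y ^ (1 - l) * 1 := by
        apply mul_le_mul_of_nonneg_left key (by positivity)
    _ = X ^ l * Y ^ (1 - l) := mul_one _

lemma scalar_key {a b p : ℝ} (hb : 0 < b) (hba : b ≤ a) (hp1 : 1 ≤ p) (hp2 : p ≤ 2) :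
    ∃ r s : ℝ, (∀ t, b ≤ t → t ≤ a → t ^ p ≤ r * t + s) ∧
      (∀ t, b ≤ t → t ≤ a → 4 * a * b / (a + b) ^ 2 * (r * t + s) ≤ t ^ p) := by
  have ha : 0 < a := hb.trans_le hba
  have hab2 : (0:ℝ) < (a + b) ^ 2 := by positivity
  have hK0 : 0 ≤ 4 * a * b / (a + b) ^ 2 := by positivity
  have hK1 : 4 * a * b / (a + b) ^ 2 ≤ 1 := by
    rw [div_le_one hab2]; nlinarith [sq_nonneg (a - b)]
  rcases eq_or_lt_of_le hba with rfl | hlt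
  ·
    refine ⟨b ^ (p - 1), 0, fun t h1 h2 => ?_, fun t h1 h2 => ?_⟩ <;>
      have ht : t = b := le_antisymm h2 h1 <;> subst ht
    · have : t ^ (p - 1) * t = t ^ p := by
        rw [Real.rpow_sub_one (ne_of_gt hb)]
        field_simp
      rw [add_zero, this]
    · have : t ^ (p - 1) * t = t ^ p := by
        rw [Real.rpow_sub_one (ne_of_gt hb)]
        field_simp
      rw [add_zero, this]
      exact mul_le_of_le_one_left (Real.rpow_nonneg hb.le p) hK1
  · -- b < a
    have hab : (0:ℝ) < a - b := by linarith
    set r := (a ^ p - b ^ p) / (a - b) with hr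
    set s := (a * b ^ p - b * a ^ p) / (a - b) with hs
    have chord : ∀ t, r * t + s =
        (a - t) / (a - b) * b ^ p + (1 - (a - t) / (a - b)) * a ^ p := by
      intro t
      rw [hr, hs]
      field_simp
      ring
    have hC1 : 1 ≤ (a + b) ^ 2 / (4 * a * b) := by
      rw [le_div_iff₀ (by positivity)]; nlinarith [sq_nonneg (a - b)]
    refine ⟨r, s, fun t h1 h2 => ?_, fun t h1 h2 => ?_⟩ <;>
      [skip; skip] <;>
      ( have hth0 : 0 ≤ (a - t) / (a - b) := by
          apply div_nonneg (by linarith) hab.le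
        have hth1 : (a - t) / (a - b) ≤ 1 := by
          rw [div_le_one hab]; linarith
        have htt : (a - t) / (a - b) * b + (1 - (a - t) / (a - b)) * a = t := by
          field_simp
          ring
        set th := (a - t) / (a - b) with hthdef )
    · -- convexity
      have hconv := (convexOn_rpow hp1).2 (Set.mem_Ici.mpr hb.le) (Set.mem_Ici.mpr ha.le)
        hth0 (by linarith : (0:ℝ) ≤ 1 - th) (by ring)
      simp only [smul_eq_mul] at hconv
      rw [htt] at hconv
      rw [chord t]
      exact hconv
    · -- reverse with Kantorovich constant
      have ht0 : 0 < t := lt_of_lt_of_le hb h1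
      set l := p - 1 with hl
      have hl0 : 0 ≤ l := by rw [hl]; linarith
      have hl1 : l ≤ 1 := by rw [hl]; linarith
      have eb : b ^ p = (b * b) ^ l * b ^ (1 - l) := by
        rw [Real.mul_rpow hb.le hb.le, ← Real.rpow_add hb, ← Real.rpow_add hb]
        congr 1
        rw [hl]; ring
      have ea : a ^ p = (a * a) ^ l * a ^ (1 - l) := by
        rw [Real.mul_rpow ha.le ha.le, ← Real.rpow_add ha, ← Real.rpow_add ha]
        congr 1
        rw [hl]; ring
      have gc := geo_concave (mul_pos hb hb) (mul_pos ha ha) hb ha hth0 hth1 hl0 hl1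
      rw [htt] at gc
      have hXeq : th * (b * b) + (1 - th) * (a * a) = (a + b) * t - a * b := by
        rw [hthdef]
        field_simp
        ring
      rw [hXeq] at gc
      have hX0 : (0:ℝ) ≤ (a + b) * t - a * b := by nlinarith
      have kant : (a + b) * t - a * b ≤ (a + b) ^ 2 / (4 * a * b) * (t * t) := by
        rw [div_mul_eq_mul_div, le_div_iff₀ (by positivity)]
        nlinarith [sq_nonneg ((a + b) * t - 2 * a * b)]
      have step2 : ((a + b) * t - a * b) ^ l * t ^ (1 - l) ≤
          ((a + b) ^ 2 / (4 * a * b) * (t * t)) ^ l * t ^ (1 - l) :=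
        mul_le_mul_of_nonneg_right (Real.rpow_le_rpow hX0 kant hl0)
          (Real.rpow_nonneg ht0.le _)
      have step3 : ((a + b) ^ 2 / (4 * a * b) * (t * t)) ^ l * t ^ (1 - l) =
          ((a + b) ^ 2 / (4 * a * b)) ^ l * t ^ p := by
        rw [Real.mul_rpow (by positivity) (by positivity),
          Real.mul_rpow ht0.le ht0.le, mul_assoc, mul_assoc, ← Real.rpow_add ht0,
          ← Real.rpow_add ht0]
        congr 2
        rw [hl]; ring
      have step4 : ((a + b) ^ 2 / (4 * a * b)) ^ l * t ^ p ≤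
          (a + b) ^ 2 / (4 * a * b) * t ^ p := by
        apply mul_le_mul_of_nonneg_right _ (Real.rpow_nonneg ht0.le p)
        calc ((a + b) ^ 2 / (4 * a * b)) ^ l ≤ ((a + b) ^ 2 / (4 * a * b)) ^ (1:ℝ) :=
              Real.rpow_le_rpow_of_exponent_le hC1 hl1
          _ = (a + b) ^ 2 / (4 * a * b) := Real.rpow_one _
      have main : r * t + s ≤ (a + b) ^ 2 / (4 * a * b) * t ^ p := by
        calc r * t + s = th * b ^ p + (1 - th) * a ^ p := chord t
          _ = th * ((b * b) ^ l * b ^ (1 - l)) + (1 - th) * ((a * a) ^ l * a ^ (1 - l)) := by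
              rw [← eb, ← ea]
          _ ≤ ((a + b) * t - a * b) ^ l * t ^ (1 - l) := gc
          _ ≤ _ := step2.trans (step3.le.trans step4)
      calc 4 * a * b / (a + b) ^ 2 * (r * t + s)
          ≤ 4 * a * b / (a + b) ^ 2 * ((a + b) ^ 2 / (4 * a * b) * t ^ p) :=
            mul_le_mul_of_nonneg_left main hK0
        _ = t ^ p := by
            field_simp

section helpers
variable {m : Type*} [Fintype m] [DecidableEq m] {M : Matrix m m ℂ}
variable {m : Type*} [Fintype m] [DecidableEq m] {M : Matrix m m ℂ}

lemma cfc_psd (hM : M.IsHermitian) (f : ℝ → ℝ)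
    (h : ∀ i, 0 ≤ f (hM.eigenvalues i)) : (hM.cfc f).PosSemidef := by
  rw [Matrix.IsHermitian.cfc, Unitary.conjStarAlgAut_apply, Matrix.star_eq_conjTranspose]
  refine Matrix.PosSemidef.mul_mul_conjTranspose_same ?_ _
  refine Matrix.posSemidef_diagonal_iff.mpr fun i => ?_
  simpa using Complex.zero_le_real.mpr (h i)

lemma cfc_sub' (hM : M.IsHermitian) (f g : ℝ → ℝ) :
    hM.cfc (fun x => f x - g x) = hM.cfc f - hM.cfc g := by
  have hd : diagonal (RCLike.ofReal ∘ (fun x => f x - g x) ∘ hM.eigenvalues) =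
      diagonal (RCLike.ofReal ∘ f ∘ hM.eigenvalues)
        - diagonal ((RCLike.ofReal ∘ g ∘ hM.eigenvalues) : m → ℂ) := by
    ext i j
    rcases eq_or_ne i j with rfl | h
    · simp
    · simp [Matrix.diagonal_apply_ne _ h]
  rw [Matrix.IsHermitian.cfc, Matrix.IsHermitian.cfc, Matrix.IsHermitian.cfc, hd,
    map_sub]

lemma cfc_affine (hM : M.IsHermitian) (r s : ℝ) :
    hM.cfc (fun x => r * x + s) = r • M + s • (1 : Matrix m m ℂ) := by
  have hU : (hM.eigenvectorUnitary : Matrix m m ℂ) *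
      star (hM.eigenvectorUnitary : Matrix m m ℂ) = 1 :=
    Unitary.mul_star_self_of_mem hM.eigenvectorUnitary.2
  have hdiag : diagonal (RCLike.ofReal ∘ (fun x => r * x + s) ∘ hM.eigenvalues) =
      r • diagonal ((RCLike.ofReal ∘ hM.eigenvalues) : m → ℂ) + s • (1 : Matrix m m ℂ) := by
    ext i j
    rcases eq_or_ne i j with rfl | h
    · simp [Matrix.one_apply, Complex.real_smul]
    · simp [Matrix.diagonal_apply_ne _ h, Matrix.one_apply_ne h]
  rw [Matrix.IsHermitian.cfc, Unitary.conjStarAlgAut_apply, hdiag, Matrix.mul_add, Matrix.add_mul,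
    mul_smul_comm, smul_mul_assoc, mul_smul_comm, smul_mul_assoc, mul_one, hU,
    ← Unitary.conjStarAlgAut_apply (S := ℂ), ← hM.spectral_theorem]

lemma star_dot_self_eigb (hM : M.IsHermitian) (i : m) :
    star ⇑(hM.eigenvectorBasis i) ⬝ᵥ ⇑(hM.eigenvectorBasis i) = 1 := by
  have h := hM.eigenvectorBasis.orthonormal.1 i
  have : (inner ℂ (hM.eigenvectorBasis i) (hM.eigenvectorBasis i) : ℂ) =
      star ⇑(hM.eigenvectorBasis i) ⬝ᵥ ⇑(hM.eigenvectorBasis i) :=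
    (EuclideanSpace.inner_eq_star_dotProduct _ _).trans (dotProduct_comm _ _)
  rw [← this, inner_self_eq_norm_sq_to_K, h]
  norm_num

lemma eig_le_of_psd (hM : M.IsHermitian) {c : ℝ}
    (h : (c • (1 : Matrix m m ℂ) - M).PosSemidef) (i : m) : hM.eigenvalues i ≤ c := by
  have h2 := h.re_dotProduct_nonneg ⇑(hM.eigenvectorBasis i)
  rw [Matrix.sub_mulVec, dotProduct_sub, map_sub, Matrix.smul_mulVec,
    Matrix.one_mulVec, dotProduct_smul, star_dot_self_eigb hM i,
    ← hM.eigenvalues_eq i] at h2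
  rw [Complex.real_smul, mul_one] at h2
  simp at h2
  linarith

lemma le_eig_of_psd (hM : M.IsHermitian) {c : ℝ}
    (h : (M - c • (1 : Matrix m m ℂ)).PosSemidef) (i : m) : c ≤ hM.eigenvalues i := by
  have h2 := h.re_dotProduct_nonneg ⇑(hM.eigenvectorBasis i)
  rw [Matrix.sub_mulVec, dotProduct_sub, map_sub, Matrix.smul_mulVec,
    Matrix.one_mulVec, dotProduct_smul, star_dot_self_eigb hM i,
    ← hM.eigenvalues_eq i] at h2
  rw [Complex.real_smul, mul_one] at h2
  simp at h2
  linarith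

lemma psd_real_smul {c : ℝ} (hc : 0 ≤ c) {N : Matrix m m ℂ} (h : N.PosSemidef) :
    (c • N).PosSemidef := by
  constructor
  · show (c • N)ᴴ = c • N
    rw [Matrix.conjTranspose_smul, star_trivial, h.1]
  · intro x
    exact (h.smul hc).2 x
end helpers

/-- The subspace `ℰ` is represented by an isometry `V` whose columns form an orthonormal basis
of `ℰ`, so the compression `X_ℰ` is `Vᴴ * X * V`; real powers of positive matrices are taken
via the functional calculus for Hermitian matrices. -/
theorem stmt_11 (n k : ℕ) (Z : Matrix (Fin n) (Fin n) ℂ) (hZ : Z.PosDef) (a b : ℝ)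
    (ha : ∀ i, hZ.1.eigenvalues i ≤ a) (ha' : ∃ i, hZ.1.eigenvalues i = a)
    (hb : ∀ i, b ≤ hZ.1.eigenvalues i) (hb' : ∃ i, hZ.1.eigenvalues i = b)
    (V : Matrix (Fin n) (Fin k) ℂ) (hV : Vᴴ * V = 1) (hk : 0 < k)
    (p : ℝ) (hp1 : 1 ≤ p) (hp2 : p ≤ 2) :
    ((Matrix.isHermitian_conjTranspose_mul_mul V hZ.1).cfc (fun x : ℝ => x ^ p) -
      (4 * a * b / (a + b) ^ 2 : ℝ) • (Vᴴ * hZ.1.cfc (fun x : ℝ => x ^ p) * V)).PosSemidef := by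
  obtain ⟨i0, hi0⟩ := hb'
  have hb0 : 0 < b := hi0 ▸ hZ.eigenvalues_pos i0
  have hba : b ≤ a := hi0 ▸ ha i0
  set K : ℝ := 4 * a * b / (a + b) ^ 2 with hKdef
  have ha0 : 0 < a := lt_of_lt_of_le hb0 hba
  have hK0 : 0 ≤ K := by positivity
  obtain ⟨r, s, h1, h2⟩ := scalar_key hb0 hba hp1 hp2
  set hY : (Vᴴ * Z * V).IsHermitian := Matrix.isHermitian_conjTranspose_mul_mul V hZ.1 with hYdef
  -- Z is between b•1 and a•1
  have hZa : (a • (1 : Matrix (Fin n) (Fin n) ℂ) - Z).PosSemidef := by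
    have hpsd := cfc_psd hZ.1 (fun x => (-1) * x + a) (fun i => by
      have := ha i; simp only [neg_one_mul]; linarith)
    rw [cfc_affine] at hpsd
    rwa [neg_one_smul, neg_add_eq_sub] at hpsd
  have hZb : (Z - b • (1 : Matrix (Fin n) (Fin n) ℂ)).PosSemidef := by
    have hpsd := cfc_psd hZ.1 (fun x => 1 * x + (-b)) (fun i => by
      have := hb i; simp only [one_mul]; linarith)
    rw [cfc_affine] at hpsd
    rwa [one_smul, neg_smul, ← sub_eq_add_neg] at hpsd
  -- transfer to Y
  have hYa : (a • (1 : Matrix (Fin k) (Fin k) ℂ) - Vᴴ * Z * V).PosSemidef := by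
    have hps := hZa.conjTranspose_mul_mul_same V
    have e : Vᴴ * (a • (1 : Matrix (Fin n) (Fin n) ℂ) - Z) * V =
        a • (1 : Matrix (Fin k) (Fin k) ℂ) - Vᴴ * Z * V := by
      rw [Matrix.mul_sub, Matrix.sub_mul, Matrix.mul_smul, Matrix.mul_one, Matrix.smul_mul, hV]
    rwa [e] at hps
  have hYb : (Vᴴ * Z * V - b • (1 : Matrix (Fin k) (Fin k) ℂ)).PosSemidef := by
    have hps := hZb.conjTranspose_mul_mul_same V
    have e : Vᴴ * (Z - b • (1 : Matrix (Fin n) (Fin n) ℂ)) * V =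
        Vᴴ * Z * V - b • (1 : Matrix (Fin k) (Fin k) ℂ) := by
      rw [Matrix.mul_sub, Matrix.sub_mul, Matrix.mul_smul, Matrix.mul_one, Matrix.smul_mul, hV]
    rwa [e] at hps
  -- PSD pieces from scalar inequalities
  have PZ : (hZ.1.cfc (fun x => r * x + s) - hZ.1.cfc (fun x : ℝ => x ^ p)).PosSemidef := by
    have := cfc_psd hZ.1 (fun x => (r * x + s) - x ^ p)
      (fun i => sub_nonneg.mpr (h1 _ (hb i) (ha i)))
    rwa [cfc_sub'] at this
  have PY : (hY.cfc (fun x : ℝ => x ^ p) - hY.cfc (fun x => K * (r * x + s))).PosSemidef := by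
    have := cfc_psd hY (fun x => x ^ p - K * (r * x + s))
      (fun i => sub_nonneg.mpr (h2 _ (le_eig_of_psd hY hYb i) (eig_le_of_psd hY hYa i)))
    rwa [cfc_sub'] at this
  -- affine identifications
  have key : hY.cfc (fun x => K * (r * x + s)) =
      K • (Vᴴ * hZ.1.cfc (fun x => r * x + s) * V) := by
    have e1 : (fun x : ℝ => K * (r * x + s)) = fun x => (K * r) * x + (K * s) := by
      funext x; ring
    rw [e1, cfc_affine, cfc_affine, Matrix.mul_add, Matrix.add_mul, Matrix.mul_smul,
      Matrix.smul_mul, Matrix.mul_smul, Matrix.mul_one, Matrix.smul_mul, hV, smul_add, smul_smul,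
      smul_smul]
  have goal_eq : hY.cfc (fun x : ℝ => x ^ p) - K • (Vᴴ * hZ.1.cfc (fun x : ℝ => x ^ p) * V)
      = (hY.cfc (fun x : ℝ => x ^ p) - hY.cfc (fun x => K * (r * x + s)))
        + K • (Vᴴ * (hZ.1.cfc (fun x => r * x + s) - hZ.1.cfc (fun x : ℝ => x ^ p)) * V) := by
    rw [Matrix.mul_sub, Matrix.sub_mul, smul_sub, key]
    abel
  rw [goal_eq]
  exact PY.add (psd_real_smul hK0 (PZ.conjTranspose_mul_mul_same V))
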